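/- Let G be a finite set with weights p_J > 0 and P(X) = Σ_{J∈X} p_J for X ⊆ G, let a > 0, q > 0 with 2a < q, let R ≥ 0, and define g(X) = max{2a + P(X), q} + q + max{R + P(G \ X), q} for X ⊆ G. Assume there exists X ⊆ G with P(X) > q − 2a, and set OPT3 = min{P(X) : X ⊆ G, P(X) > q − 2a} and OPT4 = max{P(Y) : Y ⊆ G, P(Y) ≤ q − 2a}. Let ε > 0, and suppose C ⊆ G satisfies q − 2a < P(C) ≤ (1+ε)·OPT3 and D ⊆ G satisfies P(D) ≤ q − 2a and P(D) ≥ (1−ε)·OPT4. Then min{g(C), g(D)} ≤ (1+ε)·min_{X ⊆ G} g(X). -/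
import Mathlib


open Finset

noncomputable section

/-- The constrained-makespan objective of Lemma 6.4:
`g(X) = max {2a + P(X), q} + q + max {R + P(G \ X), q}`. -/
def gfun {J : Type*} [DecidableEq J] (G : Finset J) (pw : J → ℝ) (a q R : ℝ)
    (X : Finset J) : ℝ :=
  max (2 * a + ∑ j ∈ X, pw j) q + q + max (R + ∑ j ∈ G \ X, pw j) q

/-- Lemma 6.6 (abstract form): if `C` is a `(1+ε)`-approximate Min-Knapsack solution and
`D` a `(1−ε)`-approximate Max-Knapsack solution for capacity `q − 2a`, then
`min {g(C), g(D)} ≤ (1+ε) · min_{X ⊆ G} g(X)`. -/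
theorem stmt19 {J : Type*} [DecidableEq J] (G : Finset J) (pw : J → ℝ)
    (hpw : ∀ j ∈ G, 0 < pw j)
    (a q R : ℝ) (ha : 0 < a) (hq : 0 < q) (haq : 2 * a < q) (hR : 0 ≤ R)
    (hex : ∃ X ⊆ G, q - 2 * a < ∑ j ∈ X, pw j)
    (OPT3 OPT4 : ℝ)
    (hOPT3 : IsLeast {x : ℝ | ∃ X ⊆ G, x = (∑ j ∈ X, pw j) ∧ q - 2 * a < x} OPT3)
    (hOPT4 : IsGreatest {x : ℝ | ∃ Y ⊆ G, x = (∑ j ∈ Y, pw j) ∧ x ≤ q - 2 * a} OPT4)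
    (ε : ℝ) (hε : 0 < ε)
    (C : Finset J) (hCG : C ⊆ G)
    (hC1 : q - 2 * a < ∑ j ∈ C, pw j) (hC2 : (∑ j ∈ C, pw j) ≤ (1 + ε) * OPT3)
    (D : Finset J) (hDG : D ⊆ G)
    (hD1 : (∑ j ∈ D, pw j) ≤ q - 2 * a) (hD2 : (1 - ε) * OPT4 ≤ ∑ j ∈ D, pw j) :
    min (gfun G pw a q R C) (gfun G pw a q R D)
      ≤ (1 + ε) * (G.powerset.inf' ⟨∅, Finset.empty_mem_powerset G⟩
          (gfun G pw a q R)) := by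
  obtain ⟨X, hXmem, hgX⟩ := Finset.exists_mem_eq_inf'
    (⟨∅, Finset.empty_mem_powerset G⟩ : G.powerset.Nonempty) (gfun G pw a q R)
  rw [hgX]
  have hXG : X ⊆ G := Finset.mem_powerset.mp hXmem
  set S := ∑ j ∈ G, pw j with hS
  have hsub : ∀ Z : Finset J, Z ⊆ G → ∑ j ∈ G \ Z, pw j = S - ∑ j ∈ Z, pw j :=
    fun Z hZ => Finset.sum_sdiff_eq_sub hZ
  have hPX0 : 0 ≤ ∑ j ∈ X, pw j :=
    Finset.sum_nonneg fun j hj => (hpw j (hXG hj)).le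
  have hPC0 : 0 ≤ ∑ j ∈ C, pw j :=
    Finset.sum_nonneg fun j hj => (hpw j (hCG hj)).le
  have hPD0 : 0 ≤ ∑ j ∈ D, pw j :=
    Finset.sum_nonneg fun j hj => (hpw j (hDG hj)).le
  have hS0 : 0 ≤ S := Finset.sum_nonneg fun j hj => (hpw j hj).le
  obtain ⟨X3, hX3G, hX3eq, hO3gt⟩ := hOPT3.1
  have hO4le : OPT4 ≤ q - 2 * a := by
    obtain ⟨Y, _, hYe, hYl⟩ := hOPT4.1
    exact hYe ▸ hYl
  have hO40 : 0 ≤ OPT4 :=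
    hOPT4.2 ⟨∅, Finset.empty_subset G, by simp, by linarith⟩
  by_cases hcase : q - 2 * a < ∑ j ∈ X, pw j
  · have hO3le : OPT3 ≤ ∑ j ∈ X, pw j := hOPT3.2 ⟨X, hXG, rfl, hcase⟩
    refine le_trans (min_le_left _ _) ?_
    unfold gfun
    rw [hsub C hCG, hsub X hXG,
      max_eq_left (by linarith : q ≤ 2 * a + ∑ j ∈ C, pw j),
      max_eq_left (by linarith : q ≤ 2 * a + ∑ j ∈ X, pw j)]
    have hO30 : 0 < OPT3 := by linarith
    rcases le_total (R + (S - ∑ j ∈ C, pw j)) q with h1 | h1 <;>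
      rcases le_total (R + (S - ∑ j ∈ X, pw j)) q with h2 | h2
    · rw [max_eq_right h1, max_eq_right h2]
      linarith [mul_nonneg hε.le
        (by linarith : (0:ℝ) ≤ 2 * a + (∑ j ∈ X, pw j) + 2 * q - OPT3)]
    · rw [max_eq_right h1, max_eq_left h2]
      linarith [mul_nonneg hε.le
        (by linarith : (0:ℝ) ≤ 2 * a + q + R + S - OPT3)]
    · rw [max_eq_left h1, max_eq_right h2]
      linarith [mul_nonneg hε.le
        (by linarith : (0:ℝ) ≤ 2 * a + (∑ j ∈ X, pw j) + 2 * q)]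
    · rw [max_eq_left h1, max_eq_left h2]
      linarith [mul_nonneg hε.le
        (by linarith : (0:ℝ) ≤ 2 * a + q + R + S)]
  · push_neg at hcase
    have hO4ge : ∑ j ∈ X, pw j ≤ OPT4 := hOPT4.2 ⟨X, hXG, rfl, hcase⟩
    refine le_trans (min_le_right _ _) ?_
    unfold gfun
    rw [hsub D hDG, hsub X hXG,
      max_eq_right (by linarith : 2 * a + ∑ j ∈ D, pw j ≤ q),
      max_eq_right (by linarith : 2 * a + ∑ j ∈ X, pw j ≤ q)]
    rcases le_total (R + (S - ∑ j ∈ D, pw j)) q with h1 | h1 <;>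
      rcases le_total (R + (S - ∑ j ∈ X, pw j)) q with h2 | h2
    · rw [max_eq_right h1, max_eq_right h2]
      linarith [mul_nonneg hε.le hq.le]
    · rw [max_eq_right h1, max_eq_left h2]
      linarith [mul_nonneg hε.le
        (by linarith : (0:ℝ) ≤ 2 * q + R + S - ∑ j ∈ X, pw j)]
    · rw [max_eq_left h1, max_eq_right h2]
      linarith [mul_nonneg hε.le
        (by linarith : (0:ℝ) ≤ 3 * q - OPT4)]
    · rw [max_eq_left h1, max_eq_left h2]
      linarith [mul_nonneg hε.le
        (by linarith : (0:ℝ) ≤ 2 * q + R + S - (∑ j ∈ X, pw j) - OPT4)]
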